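/- Let G be the graph on the 21 vertices {x_i, y_i, z_i : i ∈ ℤ/7ℤ} with edges {x_i, x_{i+1}}, {x_i, y_i}, {y_i, z_i}, {z_i, y_{i+1}}, {z_i, z_{i+3}} (indices modulo 7), and set X = {x_i}, Z = {z_i} and C_i = {x_i, y_i, z_i, y_{i+1}, x_{i+1}} for i ∈ ℤ/7ℤ. Then there is no stable set S of G with |S ∩ X| = 3, |S ∩ Z| = 3, and |S ∩ C_i| = 2 for every i ∈ ℤ/7ℤ. -/

import Mathlib

variable {V : Type*}

/-- A stable (independent) set of a graph. -/
def IsStableSet (G : SimpleGraph V) (S : Set V) : Prop :=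
  ∀ u ∈ S, ∀ v ∈ S, ¬ G.Adj u v

/-- The vertex set of a cycle subgraph of `G`, given by an injective
parametrization `c : ZMod m → V` (`m ≥ 3`) with consecutive vertices adjacent. -/
def IsCycleSet (G : SimpleGraph V) (C : Set V) : Prop :=
  ∃ (m : ℕ) (c : ZMod m → V), 3 ≤ m ∧ Function.Injective c ∧
    (∀ i, G.Adj (c i) (c (i + 1))) ∧ C = Set.range c

/-- The vertex set of an odd cycle subgraph of `G`. -/
def IsOddCycleSet (G : SimpleGraph V) (C : Set V) : Prop :=
  ∃ (m : ℕ) (c : ZMod m → V), 3 ≤ m ∧ Odd m ∧ Function.Injective c ∧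
    (∀ i, G.Adj (c i) (c (i + 1))) ∧ C = Set.range c

/-- The vertex set of a chordless odd cycle subgraph of `G`: the only edges of `G`
between vertices of the cycle are the cycle edges. -/
def IsChordlessOddCycleSet (G : SimpleGraph V) (C : Set V) : Prop :=
  ∃ (m : ℕ) (c : ZMod m → V), 3 ≤ m ∧ Odd m ∧ Function.Injective c ∧
    (∀ i, G.Adj (c i) (c (i + 1))) ∧
    (∀ i j, G.Adj (c i) (c j) → j = i + 1 ∨ i = j + 1) ∧
    C = Set.range c

/-- A maximal clique of `G`. -/
def IsMaximalClique (G : SimpleGraph V) (K : Set V) : Prop :=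
  G.IsClique K ∧ ∀ K' : Set V, G.IsClique K' → K ⊆ K' → K = K'

/-- Membership in HSTAB(G). -/
def memHSTAB (G : SimpleGraph V) (f : V → ℝ) : Prop :=
  (∀ x, 0 ≤ f x) ∧
  (∀ K : Set V, G.IsClique K → (∑ᶠ v ∈ K, f v) ≤ 1) ∧
  (∀ C : Set V, IsOddCycleSet G C → (∑ᶠ v ∈ C, f v) ≤ ((C.ncard : ℝ) - 1) / 2)

/-- Membership in TSTAB(G). -/
def memTSTAB (G : SimpleGraph V) (f : V → ℝ) : Prop :=
  (∀ x, 0 ≤ f x ∧ f x ≤ 1) ∧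
  (∀ x y, G.Adj x y → f x + f y ≤ 1) ∧
  (∀ C : Set V, IsOddCycleSet G C → (∑ᶠ v ∈ C, f v) ≤ ((C.ncard : ℝ) - 1) / 2)

/-- Membership in QSTAB(G). -/
def memQSTAB (G : SimpleGraph V) (f : V → ℝ) : Prop :=
  (∀ x, 0 ≤ f x) ∧
  (∀ K : Set V, G.IsClique K → (∑ᶠ v ∈ K, f v) ≤ 1)

/-- The stable set polytope STAB(G). -/
def STAB (G : SimpleGraph V) : Set (V → ℝ) :=
  convexHull ℝ {f : V → ℝ | ∃ S : Set V, IsStableSet G S ∧ f = S.indicator 1}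

/-- The set `U^(n)` of the paper, as a predicate on pairs `(g, d)`. -/
def memU (G : SimpleGraph V) (n : ℤ) (g : V → ℤ) (d : ℤ) : Prop :=
  (∀ v, n ≤ g v) ∧
  (∀ K : Set V, IsMaximalClique G K → (∑ᶠ v ∈ K, g v) ≤ d - n) ∧
  (∀ C : Set V, IsChordlessOddCycleSet G C → 5 ≤ C.ncard →
    2 * (∑ᶠ v ∈ C, g v) ≤ d * ((C.ncard : ℤ) - 1) - 2 * n)
/-- The 21 vertices `x_i, y_i, z_i`, `i ∈ ℤ/7ℤ`. -/
inductive Vtx : Type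
  | x : ZMod 7 → Vtx
  | y : ZMod 7 → Vtx
  | z : ZMod 7 → Vtx
  deriving DecidableEq, Fintype

/-- The oriented edge relation of the example graph. -/
def paperRel : Vtx → Vtx → Prop := fun u v =>
  (∃ i, u = Vtx.x i ∧ v = Vtx.x (i + 1)) ∨
  (∃ i, u = Vtx.x i ∧ v = Vtx.y i) ∨
  (∃ i, u = Vtx.y i ∧ v = Vtx.z i) ∨
  (∃ i, u = Vtx.z i ∧ v = Vtx.y (i + 1)) ∨
  (∃ i, u = Vtx.z i ∧ v = Vtx.z (i + 3))

instance : DecidableRel paperRel := fun u v => by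
  unfold paperRel; infer_instance

/-- The example graph of the paper. -/
def paperGraph : SimpleGraph Vtx where
  Adj u v := paperRel u v ∨ paperRel v u
  symm := ⟨fun _ _ h => Or.symm h⟩
  loopless := ⟨by
    show ∀ a, ¬(paperRel a a ∨ paperRel a a)
    decide⟩

/-- The set `X = {x_i}`. -/
def Xset : Set Vtx := Set.range Vtx.x
/-- The set `Y = {y_i}`. -/
def Yset : Set Vtx := Set.range Vtx.y
/-- The set `Z = {z_i}`. -/
def Zset : Set Vtx := Set.range Vtx.z

/-- there is no stable set `S` of the example graph with
`|S ∩ X| = 3`, `|S ∩ Z| = 3` and `|S ∩ C_i| = 2` for every `i`. -/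
theorem stmt16 : ¬ ∃ S : Set Vtx, IsStableSet paperGraph S ∧
    (S ∩ Xset).ncard = 3 ∧ (S ∩ Zset).ncard = 3 ∧
    ∀ i : ZMod 7,
      (S ∩ {Vtx.x i, Vtx.y i, Vtx.z i, Vtx.y (i + 1), Vtx.x (i + 1)}).ncard = 2 := by
  classical
  rintro ⟨S, -, hX, hZ, hC⟩
  set ind : Vtx → ℕ := fun v => if v ∈ S then 1 else 0 with hind
  have key : ∀ F : Finset Vtx, (S ∩ ↑F).ncard = ∑ v ∈ F, ind v := by
    intro F
    have hset : S ∩ ↑F = ↑(F.filter (· ∈ S)) := by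
      ext v; simp [and_comm]
    rw [hset, Set.ncard_coe_finset, Finset.card_filter]
  -- X count
  have hXf : Xset = ↑((Finset.univ : Finset (ZMod 7)).image Vtx.x) := by
    ext v; simp [Xset]
  have hZf : Zset = ↑((Finset.univ : Finset (ZMod 7)).image Vtx.z) := by
    ext v; simp [Zset]
  have hxinj : Function.Injective Vtx.x := fun a b h => by injection h
  have hzinj : Function.Injective Vtx.z := fun a b h => by injection h
  have hX' : ∑ i : ZMod 7, ind (Vtx.x i) = 3 := by
    have := hX
    rw [hXf, key, Finset.sum_image (fun a _ b _ h => hxinj h)] at this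
    exact this
  have hZ' : ∑ i : ZMod 7, ind (Vtx.z i) = 3 := by
    have := hZ
    rw [hZf, key, Finset.sum_image (fun a _ b _ h => hzinj h)] at this
    exact this
  -- C_i counts
  have hCf : ∀ i : ZMod 7, ({Vtx.x i, Vtx.y i, Vtx.z i, Vtx.y (i + 1), Vtx.x (i + 1)} : Set Vtx)
      = ↑({Vtx.x i, Vtx.y i, Vtx.z i, Vtx.y (i + 1), Vtx.x (i + 1)} : Finset Vtx) := by
    intro i; simp
  have hne : ∀ i : ZMod 7, i ≠ i + 1 := by
    intro i h
    have : (1 : ZMod 7) = 0 := by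
      have := congrArg (· - i) h
      simpa [add_sub_cancel_left] using this.symm
    exact absurd this (by decide)
  have hC' : ∀ i : ZMod 7,
      ind (Vtx.x i) + ind (Vtx.y i) + ind (Vtx.z i) + ind (Vtx.y (i + 1)) + ind (Vtx.x (i + 1)) = 2 := by
    intro i
    have h2 := hC i
    rw [hCf, key] at h2
    rw [Finset.sum_insert (by simp [hne i]), Finset.sum_insert (by simp [hne i]),
      Finset.sum_insert (by simp), Finset.sum_insert (by simp [hne i]),
      Finset.sum_singleton] at h2
    omega
  have hsum : ∑ i : ZMod 7,
      (ind (Vtx.x i) + ind (Vtx.y i) + ind (Vtx.z i) + ind (Vtx.y (i + 1)) + ind (Vtx.x (i + 1))) = 14 := by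
    simp [hC']
  rw [Finset.sum_add_distrib, Finset.sum_add_distrib, Finset.sum_add_distrib,
    Finset.sum_add_distrib] at hsum
  have e1 : ∑ i : ZMod 7, ind (Vtx.x (i + 1)) = ∑ i : ZMod 7, ind (Vtx.x i) :=
    Fintype.sum_equiv (Equiv.addRight 1) _ _ (fun i => rfl)
  have e2 : ∑ i : ZMod 7, ind (Vtx.y (i + 1)) = ∑ i : ZMod 7, ind (Vtx.y i) :=
    Fintype.sum_equiv (Equiv.addRight 1) _ _ (fun i => rfl)
  rw [e1, e2, hX', hZ'] at hsum
  omega
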